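/- Let A be a finite nonempty type, I : A × A × A → ℝ, and define F : (A × A) × (A × A) → WithTop ℝ by F((s,t),(t',u)) = I(s,t,u) if t = t' and F((s,t),(t',u)) = ⊤ otherwise. Then for every N ≥ 1, the tropical trace of the N-th tropical power of F is finite and equals the minimum over all functions s : ZMod N → A of Σ_{i ∈ ZMod N} I(s_i, s_{i+1}, s_{i+2}). -/
import Mathlib


open Tropical Finset


/-- The matrix `F` over the min-plus semiring associated to a tripartite function
`I : A × A × A → ℝ`: the entry at `((s,t),(t',u))` is `I (s,t,u)` when `t = t'` and
the tropical zero `⊤` otherwise. -/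
noncomputable def tripartiteTropMatrix {A : Type*} [DecidableEq A] (I : A × A × A → ℝ) :
    Matrix (A × A) (A × A) (Tropical (WithTop ℝ)) :=
  Matrix.of fun p q =>
    if p.2 = q.1 then Tropical.trop ((I (p.1, p.2, q.2) : ℝ) : WithTop ℝ)
    else Tropical.trop (⊤ : WithTop ℝ)

section WalkSum

variable {ι R : Type*} [Fintype ι] [DecidableEq ι] [CommSemiring R]

omit [Fintype ι] [DecidableEq ι] in
private lemma cons_snoc_castSucc {n : ℕ} (i j : ι) (c : Fin n → ι) (m : Fin (n + 1)) :
    (Fin.cons i (Fin.snoc c j) : Fin (n + 2) → ι) m.castSucc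
      = (Fin.cons i c : Fin (n + 1) → ι) m := by
  induction m using Fin.cases with
  | zero => simp
  | succ t => rw [← Fin.succ_castSucc]; simp

private lemma pow_apply_walk (M : Matrix ι ι R) (n : ℕ) (i j : ι) :
    (M ^ (n + 1)) i j
      = ∑ c : Fin n → ι, ∏ k : Fin (n + 1),
          M ((Fin.cons i (Fin.snoc c j) : Fin (n + 2) → ι) k.castSucc)
            ((Fin.cons i (Fin.snoc c j) : Fin (n + 2) → ι) k.succ) := by
  induction n generalizing j with
  | zero =>
      rw [pow_one, Fintype.sum_unique, Fin.prod_univ_one]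
      simp [Fin.snoc]
  | succ n IH =>
      rw [pow_succ, Matrix.mul_apply]
      simp_rw [IH, Finset.sum_mul]
      rw [← Equiv.sum_comp (Fin.snocEquiv fun _ => ι), Fintype.sum_prod_type]
      refine Finset.sum_congr rfl fun x _ => Finset.sum_congr rfl fun c _ => ?_
      have key : ∀ m : Fin (n + 2),
          (Fin.cons i (Fin.snoc (Fin.snoc c x) j) : Fin (n + 3) → ι) m.castSucc
            = (Fin.cons i (Fin.snoc c x) : Fin (n + 2) → ι) m :=
        cons_snoc_castSucc i j (Fin.snoc c x)
      have hsnoc : (Fin.snocEquiv fun _ : Fin (n + 1) => ι) (x, c) = Fin.snoc c x := by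
        funext m; simp [Fin.snocEquiv]
      rw [hsnoc, Fin.prod_univ_castSucc (n := n+1)]
      congr 1
      · refine Finset.prod_congr rfl fun k _ => ?_
        rw [Fin.succ_castSucc, key k.castSucc, key k.succ, cons_snoc_castSucc]
      · have h1 : (Fin.cons i (Fin.snoc c x) : Fin (n + 2) → ι) (Fin.last (n + 1)) = x := by
          rw [← Fin.succ_last, Fin.cons_succ, Fin.snoc_last]
        have h2 : (Fin.cons i (Fin.snoc (Fin.snoc c x) j) : Fin (n + 3) → ι)
            (Fin.last (n + 2)) = j := by
          rw [← Fin.succ_last, Fin.cons_succ, Fin.snoc_last]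
        rw [key (Fin.last (n + 1)), Fin.succ_last, h1, h2]
private lemma trace_pow_fin (M : Matrix ι ι R) (n : ℕ) :
    (M ^ (n + 1)).trace
      = ∑ d : Fin (n + 1) → ι, ∏ k : Fin (n + 1), M (d k) (d (k + 1)) := by
  rw [← Equiv.sum_comp (Fin.consEquiv fun _ => ι)
        (fun d => ∏ k : Fin (n + 1), M (d k) (d (k + 1))), Fintype.sum_prod_type]
  simp only [Matrix.trace, Matrix.diag]
  refine Finset.sum_congr rfl fun i _ => ?_
  rw [pow_apply_walk]
  refine Finset.sum_congr rfl fun c _ => Finset.prod_congr rfl fun k _ => ?_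
  have hc : (Fin.consEquiv fun _ : Fin (n + 1) => ι) (i, c) = Fin.cons i c := rfl
  rw [hc]
  congr 1
  · exact cons_snoc_castSucc i i c k
  · rw [Fin.cons_succ]
    induction k using Fin.lastCases with
    | last => simp
    | cast t =>
        have ht : (t.castSucc : Fin (n + 1)) + 1 = t.succ := by
          apply Fin.ext
          rw [Fin.val_add_one_of_lt (Fin.castSucc_lt_last t)]
          simp
        rw [ht, Fin.snoc_castSucc, Fin.cons_succ]

private lemma trace_pow_zmod (M : Matrix ι ι R) (n : ℕ) :
    (M ^ (n + 1)).trace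
      = ∑ d : ZMod (n + 1) → ι, ∏ k : ZMod (n + 1), M (d k) (d (k + 1)) := by
  rw [trace_pow_fin]
  rfl

end WalkSum

/-- for every `N ≥ 1`, the tropical trace of the `N`-th tropical power
of `F` is finite and equals the minimum over all `s : ZMod N → A` of
`Σ_i I (s i, s (i+1), s (i+2))`. -/
theorem trace_pow_tripartiteTropMatrix {A : Type*} [Fintype A] [DecidableEq A]
    [Nonempty A] (I : A × A × A → ℝ) (N : ℕ) [NeZero N] :
    Matrix.trace (tripartiteTropMatrix I ^ N)
      = Tropical.trop
          ((Finset.univ.inf' Finset.univ_nonempty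
              (fun s : ZMod N → A =>
                ∑ i : ZMod N, I (s i, s (i + 1), s (i + 2))) : ℝ) : WithTop ℝ) := by
  obtain ⟨n, rfl⟩ := Nat.exists_eq_succ_of_ne_zero (NeZero.ne N)
  rw [trace_pow_zmod, Finset.coe_inf', Finset.trop_inf]
  set F := tripartiteTropMatrix I with hF
  set e : (ZMod (n + 1) → A) → (ZMod (n + 1) → A × A) := fun s k => (s k, s (k + 1)) with he
  have einj : Function.Injective e := by
    intro s s' h
    funext k
    exact congrArg Prod.fst (congrFun h k)
  calc ∑ d : ZMod (n + 1) → A × A, ∏ k, F (d k) (d (k + 1))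
      = ∑ d ∈ Finset.univ.image e, ∏ k, F (d k) (d (k + 1)) := by
        refine (Finset.sum_subset (Finset.subset_univ _) fun d _ hd => ?_).symm
        have hbad : ¬ ∀ k, (d k).2 = (d (k + 1)).1 := by
          intro hall
          exact hd (Finset.mem_image.mpr ⟨fun k => (d k).1, Finset.mem_univ _,
            funext fun k => Prod.ext rfl (hall k).symm⟩)
        push_neg at hbad
        obtain ⟨k, hk⟩ := hbad
        apply Finset.prod_eq_zero (Finset.mem_univ k)
        simp [hF, tripartiteTropMatrix, hk]
    _ = ∑ s : ZMod (n + 1) → A, ∏ k, F (e s k) (e s (k + 1)) :=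
        Finset.sum_image fun x _ y _ h => einj h
    _ = ∑ s : ZMod (n + 1) → A,
          Tropical.trop (((∑ i : ZMod (n + 1), I (s i, s (i + 1), s (i + 2)) : ℝ) : WithTop ℝ)) := by
        refine Finset.sum_congr rfl fun s _ => ?_
        rw [WithTop.coe_sum, trop_sum]
        refine Finset.prod_congr rfl fun k _ => ?_
        have h2 : k + 1 + 1 = k + 2 := by ring
        simp [hF, tripartiteTropMatrix, he, h2]
    _ = ∑ s : ZMod (n + 1) → A,
          Tropical.trop ((((↑) : ℝ → WithTop ℝ) ∘ fun s : ZMod (n + 1) → A =>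
            ∑ i : ZMod (n + 1), I (s i, s (i + 1), s (i + 2))) s) := rfl
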